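/- Let E be a real normed vector space, r ≥ 2 an integer and ε > 0. Let σ : [−1,1] → E be a C^r curve that is bounded but not strongly ε-bounded, i.e. sup_{2 ≤ s ≤ r} sup_{t ∈ [−1,1]} ‖σ^{(s)}(t)‖ ≤ (1/6)·M and M > ε, where M := sup_{t ∈ [−1,1]} ‖σ′(t)‖. Set t₁ := ε/M − 1 and t₂ := 1 − ε/M, and let θ⁻ : [−1,1] → [−1, t₁] and θ⁺ : [−1,1] → [t₂, 1] be the increasing affine bijections. Then −1 < t₁ < 0 < t₂ < 1 and both σ∘θ⁻ and σ∘θ⁺ are strongly ε-bounded. -/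

import Mathlib

open Set

/-- `D` is a family of successive derivatives (up to order `r`) of the curve `D 0` on
`[−1,1]`: `D (k+1)` is the derivative of `D k` within `[−1,1]`, for every `k < r`. -/
def DerivFamilyOn {E : Type*} [NormedAddCommGroup E] [NormedSpace ℝ E]
    (r : ℕ) (D : ℕ → ℝ → E) : Prop :=
  ∀ k < r, ∀ t ∈ Icc (-1:ℝ) 1, HasDerivWithinAt (D k) (D (k + 1) t) (Icc (-1:ℝ) 1) t

/-- The supremum `sup_{t ∈ [−1,1]} ‖D 1 (t)‖` of the norm of the first derivative. -/
noncomputable def supD1 {E : Type*} [NormedAddCommGroup E] [NormedSpace ℝ E]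
    (D : ℕ → ℝ → E) : ℝ :=
  ⨆ t : Icc (-1:ℝ) 1, ‖D 1 t.1‖

/-- The curve `D 0` is *bounded*: `sup_{2 ≤ s ≤ r} sup_{t ∈ [−1,1]} ‖D s (t)‖ ≤ (1/6)·sup ‖D 1‖`. -/
def BoundedFamily {E : Type*} [NormedAddCommGroup E] [NormedSpace ℝ E]
    (r : ℕ) (D : ℕ → ℝ → E) : Prop :=
  ∀ s, 2 ≤ s → s ≤ r → ∀ t ∈ Icc (-1:ℝ) 1, ‖D s t‖ ≤ (1 / 6) * supD1 D

/-- The curve `D 0` is *strongly ε-bounded*: it is bounded and `sup ‖D 1‖ ≤ ε`. -/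
def StronglyBoundedFamily {E : Type*} [NormedAddCommGroup E] [NormedSpace ℝ E]
    (r : ℕ) (ε : ℝ) (D : ℕ → ℝ → E) : Prop :=
  BoundedFamily r D ∧ ∀ t ∈ Icc (-1:ℝ) 1, ‖D 1 t‖ ≤ ε

/-- The family of successive derivatives of the reparametrized curve `t ↦ D 0 (c·t + d)`:
its `k`-th derivative is `c^k • D k (c·t + d)`. -/
noncomputable def affineReparam {E : Type*} [NormedAddCommGroup E] [NormedSpace ℝ E]
    (c d : ℝ) (D : ℕ → ℝ → E) : ℕ → ℝ → E :=
  fun k t => c ^ k • D k (c * t + d)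

lemma aux_reparam {E : Type*} [NormedAddCommGroup E] [NormedSpace ℝ E]
    (r : ℕ) (hr : 2 ≤ r) (ε : ℝ) (hε : 0 < ε)
    (D : ℕ → ℝ → E)
    (hD : DerivFamilyOn r D) (hb : BoundedFamily r D) (hns : ε < supD1 D)
    (c d : ℝ) (hc : 0 < c) (hcε : 2 * c * supD1 D = ε)
    (hmaps : ∀ t ∈ Icc (-1:ℝ) 1, c * t + d ∈ Icc (-1:ℝ) 1) :
    DerivFamilyOn r (affineReparam c d D) ∧
      StronglyBoundedFamily r ε (affineReparam c d D) := by
  set M := supD1 D with hM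
  have hM0 : 0 < M := hε.trans hns
  haveI : Nonempty (Icc (-1:ℝ) 1) := ⟨⟨0, by norm_num⟩⟩
  -- continuity of D 1 on Icc
  have hcont : ContinuousOn (D 1) (Icc (-1:ℝ) 1) := fun t ht =>
    (hD 1 (by omega) t ht).continuousWithinAt
  obtain ⟨C, hC⟩ := isCompact_Icc.exists_bound_of_continuousOn hcont
  have bdd : BddAbove (Set.range fun t : Icc (-1:ℝ) 1 => ‖D 1 t.1‖) := by
    refine ⟨C, ?_⟩
    rintro x ⟨t, rfl⟩
    exact hC t.1 t.2
  have hle : ∀ t ∈ Icc (-1:ℝ) 1, ‖D 1 t‖ ≤ M := fun t ht =>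
    le_ciSup bdd (⟨t, ht⟩ : Icc (-1:ℝ) 1)
  -- lower bound on ‖D 1‖ everywhere
  have hD2 : ∀ t ∈ Icc (-1:ℝ) 1, ‖D 2 t‖ ≤ (1/6) * M := hb 2 le_rfl hr
  have hlower : ∀ v ∈ Icc (-1:ℝ) 1, 2/3 * M ≤ ‖D 1 v‖ := by
    intro v hv
    have key : ∀ u ∈ Icc (-1:ℝ) 1, ‖D 1 u‖ ≤ ‖D 1 v‖ + M/3 := by
      intro u hu
      have := (convex_Icc (-1:ℝ) 1).norm_image_sub_le_of_norm_hasDerivWithin_le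
        (f' := D 2) (fun x hx => hD 1 (by omega) x hx) hD2 hv hu
      have habs : ‖u - v‖ ≤ 2 := by
        rw [Real.norm_eq_abs, abs_sub_le_iff]
        constructor <;> [linarith [hu.1, hu.2, hv.1, hv.2]; linarith [hu.1, hu.2, hv.1, hv.2]]
      have h1 : ‖D 1 u - D 1 v‖ ≤ (1/6) * M * 2 := by
        calc ‖D 1 u - D 1 v‖ ≤ (1/6) * M * ‖u - v‖ := this
          _ ≤ (1/6) * M * 2 := by
              apply mul_le_mul_of_nonneg_left habs (by positivity)
      have := norm_sub_norm_le (D 1 u) (D 1 v)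
      linarith [this.trans h1]
    have : M ≤ ‖D 1 v‖ + M/3 := by
      apply ciSup_le
      rintro ⟨u, hu⟩
      exact key u hu
    linarith
  have hc1 : 2 * c < 1 := by
    by_contra h
    push_neg at h
    have : M ≤ 2 * c * M := le_mul_of_one_le_left hM0.le h
    rw [hcε] at this
    linarith
  -- derivative family
  have hderiv : DerivFamilyOn r (affineReparam c d D) := by
    intro k hk t ht
    have hu : c * t + d ∈ Icc (-1:ℝ) 1 := hmaps t ht
    have haff : HasDerivWithinAt (fun t => c * t + d) c (Icc (-1:ℝ) 1) t := by
      simpa using (((hasDerivAt_id t).const_mul c).add_const d).hasDerivWithinAt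
    have hcomp : HasDerivWithinAt (fun t => D k (c * t + d)) (c • D (k+1) (c*t+d))
        (Icc (-1:ℝ) 1) t :=
      HasDerivWithinAt.scomp t (hD k hk _ hu) haff (fun x hx => hmaps x hx)
    have := hcomp.const_smul (c ^ k)
    have e : affineReparam c d D k = c ^ k • fun t => D k (c * t + d) := by funext x; rfl
    rw [e]
    simpa [affineReparam, smul_smul, pow_succ, mul_comm] using this
  refine ⟨hderiv, ?_, ?_⟩
  · -- BoundedFamily
    intro s hs2 hsr t ht
    have hu : c * t + d ∈ Icc (-1:ℝ) 1 := hmaps t ht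
    have hnorm : ‖affineReparam c d D s t‖ = c ^ s * ‖D s (c*t+d)‖ := by
      simp [affineReparam, norm_smul, abs_pow, abs_of_pos hc]
    -- lower bound on supD1 of reparam
    have bdd' : BddAbove (Set.range fun t : Icc (-1:ℝ) 1 => ‖affineReparam c d D 1 t.1‖) := by
      refine ⟨c * M, ?_⟩
      rintro x ⟨u, rfl⟩
      show ‖affineReparam c d D 1 u.1‖ ≤ c * M
      have : ‖affineReparam c d D 1 u.1‖ = c * ‖D 1 (c*u.1+d)‖ := by
        simp [affineReparam, norm_smul, abs_of_pos hc]
      rw [this]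
      exact mul_le_mul_of_nonneg_left (hle _ (hmaps u.1 u.2)) hc.le
    have hsup' : c * (2/3 * M) ≤ supD1 (affineReparam c d D) := by
      have hd : d ∈ Icc (-1:ℝ) 1 := by simpa using hmaps 0 (by norm_num)
      have h0 : c * (2/3 * M) ≤ ‖affineReparam c d D 1 (0:ℝ)‖ := by
        have : ‖affineReparam c d D 1 (0:ℝ)‖ = c * ‖D 1 d‖ := by
          simp [affineReparam, norm_smul, abs_of_pos hc]
        rw [this]
        exact mul_le_mul_of_nonneg_left (hlower d hd) hc.le
      exact h0.trans (le_ciSup bdd' (⟨0, by norm_num⟩ : Icc (-1:ℝ) 1))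
    rw [hnorm]
    have hcs : c ^ s ≤ c * (2/3) := by
      calc c ^ s ≤ c ^ 2 := by
            apply pow_le_pow_of_le_one hc.le (by linarith) hs2
        _ = c * c := sq c
        _ ≤ c * (2/3) := by nlinarith
    calc c ^ s * ‖D s (c*t+d)‖ ≤ c * (2/3) * ((1/6) * M) := by
          apply mul_le_mul hcs (hb s hs2 hsr _ hu) (norm_nonneg _) (by positivity)
      _ = (1/6) * (c * (2/3 * M)) := by ring
      _ ≤ (1/6) * supD1 (affineReparam c d D) := by linarith [hsup']
  · -- sup ≤ ε
    intro t ht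
    have hu : c * t + d ∈ Icc (-1:ℝ) 1 := hmaps t ht
    have : ‖affineReparam c d D 1 t‖ = c * ‖D 1 (c*t+d)‖ := by
      simp [affineReparam, norm_smul, abs_of_pos hc]
    rw [this]
    calc c * ‖D 1 (c*t+d)‖ ≤ c * M := mul_le_mul_of_nonneg_left (hle _ hu) hc.le
      _ ≤ ε := by nlinarith [hcε]

/-- (Second assertion of the paper's Lemma 2-Res, with the explicit
`t₁ = ε/M − 1`, `t₂ = 1 − ε/M`.) If the C^r curve `σ = D 0` is bounded but not strongly
ε-bounded (`M := sup ‖σ′‖ > ε`), then `−1 < t₁ < 0 < t₂ < 1` and the affine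
reparametrizations of `σ` onto `[−1,t₁]` and `[t₂,1]` are strongly ε-bounded. -/
theorem stmt_6 {E : Type*} [NormedAddCommGroup E] [NormedSpace ℝ E]
    (r : ℕ) (hr : 2 ≤ r) (ε : ℝ) (hε : 0 < ε)
    (σ : ℝ → E) (D : ℕ → ℝ → E) (hD0 : D 0 = σ)
    (hD : DerivFamilyOn r D) (hb : BoundedFamily r D) (hns : ε < supD1 D)
    (t₁ t₂ : ℝ) (ht₁ : t₁ = ε / supD1 D - 1) (ht₂ : t₂ = 1 - ε / supD1 D) :
    (-1 < t₁ ∧ t₁ < 0 ∧ 0 < t₂ ∧ t₂ < 1) ∧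
    (DerivFamilyOn r (affineReparam ((t₁ + 1) / 2) ((t₁ - 1) / 2) D) ∧
      StronglyBoundedFamily r ε (affineReparam ((t₁ + 1) / 2) ((t₁ - 1) / 2) D)) ∧
    (DerivFamilyOn r (affineReparam ((1 - t₂) / 2) ((1 + t₂) / 2) D) ∧
      StronglyBoundedFamily r ε (affineReparam ((1 - t₂) / 2) ((1 + t₂) / 2) D)) := by
  set M := supD1 D with hM
  have hM0 : 0 < M := hε.trans hns
  have hq0 : 0 < ε / M := div_pos hε hM0
  have hq1 : ε / M < 1 := (div_lt_one hM0).2 hns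
  have hcε : 2 * (ε / M / 2) * M = ε := by field_simp
  have hc0 : 0 < ε / M / 2 := by linarith
  have hc₁ : (t₁ + 1) / 2 = ε / M / 2 := by rw [ht₁]; ring
  have hd₁ : (t₁ - 1) / 2 = ε / M / 2 - 1 := by rw [ht₁]; ring
  have hc₂ : (1 - t₂) / 2 = ε / M / 2 := by rw [ht₂]; ring
  have hd₂ : (1 + t₂) / 2 = 1 - ε / M / 2 := by rw [ht₂]; ring
  refine ⟨⟨by rw [ht₁]; linarith, by rw [ht₁]; linarith,
    by rw [ht₂]; linarith, by rw [ht₂]; linarith⟩, ?_, ?_⟩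
  · rw [hc₁, hd₁]
    exact aux_reparam r hr ε hε D hD hb hns _ _ hc0 hcε (by
      intro t ht
      obtain ⟨h1, h2⟩ := ht
      constructor
      · nlinarith
      · nlinarith)
  · rw [hc₂, hd₂]
    exact aux_reparam r hr ε hε D hD hb hns _ _ hc0 hcε (by
      intro t ht
      obtain ⟨h1, h2⟩ := ht
      constructor
      · nlinarith
      · nlinarith)
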